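/- (Policy improvement, one step) Let π⁰ be the Gaussian policy N(K(x-ρ_t w), λBC^{T-t-1}) with value function J^{π⁰}(t,x) = A^{T-t}(x-ρ_t w)² + f(t), where A = r_f² + (a²+σ²)K² + 2r_f aK. Define the improved policy π¹_t(·;x) as the density minimizing ∫[A^{T-t-1}((a²+σ²)u² + 2a(r_f x - ρ_{t+1}w)u) + λ ln π(u)]π(u)du. Then π¹_t = N(-a r_f(x-ρ_t w)/(a²+σ²), λ/(2(a²+σ²)A^{T-t-1})), and the resulting value J^{π¹}(t,x) = A^{T-t-1}(σ²r_f²/(a²+σ²))(x-ρ_t w)² + (λ/2)ln((a²+σ²)/(πλ)) + (λ ln A/2)(T-t-1) + f(t+1) satisfies J^{π¹}(t,x) ≤ J^{π⁰}(t,x) for all x. -/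

import Mathlib

open MeasureTheory Real

/-- Gaussian density with mean `m` and variance `s2`. -/
noncomputable def gaussPdf (m s2 u : ℝ) : ℝ :=
  (Real.sqrt (2 * Real.pi * s2))⁻¹ * Real.exp (-(u - m) ^ 2 / (2 * s2))

/-- A probability density on ℝ with finite relevant integrals. -/
def IsAdmissibleDensity (p : ℝ → ℝ) : Prop :=
  (∀ u, 0 ≤ p u) ∧ (∫ u, p u) = 1 ∧
    Integrable (fun u => u ^ 2 * p u) ∧
    Integrable (fun u => p u * Real.log (p u))

/-- The function `f` of the paper's Theorem 2. -/
noncomputable def fPaper (lam B C A a σ w b : ℝ) (T s : ℕ) : ℝ :=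
  lam * B * (a ^ 2 + σ ^ 2) * (1 - (C * A) ^ (T - s)) / (1 - C * A) -
    lam / 2 * Real.log (2 * Real.pi * lam * B) * ((T : ℝ) - s) -
    lam / 2 * ((T : ℝ) - s) -
    lam / 2 * Real.log C * (∑ i ∈ Finset.range (T - s), (i : ℝ)) - (w - b) ^ 2

lemma gaussPdf_eq (m s2 : ℝ) (hs2 : 0 ≤ s2) :
    gaussPdf m s2 = ProbabilityTheory.gaussianPDFReal m ⟨s2, hs2⟩ := by
  funext u
  simp [gaussPdf, ProbabilityTheory.gaussianPDFReal, neg_div]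
  rfl

lemma gaussPdf_pos {s2 : ℝ} (m : ℝ) (hs2 : 0 < s2) (u : ℝ) : 0 < gaussPdf m s2 u := by
  have : (0:ℝ) < Real.sqrt (2 * Real.pi * s2) := Real.sqrt_pos.2 (by positivity)
  unfold gaussPdf
  positivity

lemma integrable_gaussPdf {s2 : ℝ} (m : ℝ) (hs2 : 0 < s2) : Integrable (gaussPdf m s2) := by
  rw [gaussPdf_eq m s2 hs2.le]
  exact ProbabilityTheory.integrable_gaussianPDFReal m _

lemma integral_gaussPdf {s2 : ℝ} (m : ℝ) (hs2 : 0 < s2) : ∫ u, gaussPdf m s2 u = 1 := by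
  rw [gaussPdf_eq m s2 hs2.le]
  exact ProbabilityTheory.integral_gaussianPDFReal_eq_one m
    (by intro h; apply hs2.ne'; have := congrArg NNReal.toReal h; rwa [NNReal.coe_zero] at this)

lemma log_gaussPdf {s2 : ℝ} (m : ℝ) (hs2 : 0 < s2) (u : ℝ) :
    Real.log (gaussPdf m s2 u) = -(u - m) ^ 2 / (2 * s2) - Real.log (2 * Real.pi * s2) / 2 := by
  have h1 : (0:ℝ) < 2 * Real.pi * s2 := by positivity
  have h2 : (0:ℝ) < Real.sqrt (2 * Real.pi * s2) := Real.sqrt_pos.2 h1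
  rw [gaussPdf, Real.log_mul (by positivity) (Real.exp_ne_zero _), Real.log_inv, Real.log_exp,
    Real.log_sqrt h1.le]
  ring

lemma fPaper_step (a σ lam w b B C A : ℝ) (T t : ℕ) (ht : t < T) (hD : 1 - C * A ≠ 0) :
    fPaper lam B C A a σ w b T t =
        fPaper lam B C A a σ w b T (t + 1) +
        lam * B * (a ^ 2 + σ ^ 2) * (C * A) ^ (T - t - 1) -
        lam / 2 * Real.log (2 * Real.pi * lam * B) - lam / 2 -
        lam / 2 * Real.log C * ((T - t - 1 : ℕ) : ℝ) := by
  unfold fPaper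
  rw [show T - t = (T - t - 1) + 1 by omega, show T - (t + 1) = T - t - 1 by omega,
    Finset.sum_range_succ, pow_succ]
  push_cast
  field_simp
  ring

set_option maxHeartbeats 2000000 in
/-- Policy improvement, one step. -/
theorem stmt10 (a σ rf lam w b K B C x : ℝ)
    (hσ : 0 < σ) (hrf : 0 < rf) (hlam : 0 < lam) (hB : 0 < B) (hC : 0 < C)
    (T t : ℕ) (ht : t < T)
    (A : ℝ) (hA : A = rf ^ 2 + (a ^ 2 + σ ^ 2) * K ^ 2 + 2 * rf * a * K)
    (hApos : 0 < A) (hCA : C * A ≠ 1) :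
    let ρt : ℝ := (rf⁻¹) ^ (T - t)
    let ρt1 : ℝ := (rf⁻¹) ^ (T - (t + 1))
    -- value of a density p in the one-step improvement functional
    let G : (ℝ → ℝ) → ℝ := fun p =>
      (∫ u, (A ^ (T - t - 1) * ((a ^ 2 + σ ^ 2) * u ^ 2 +
          2 * a * (rf * x - ρt1 * w) * u) + lam * Real.log (p u)) * p u) +
        A ^ (T - t - 1) * (rf * x - ρt1 * w) ^ 2 + fPaper lam B C A a σ w b T (t + 1)
    -- the improved policy
    let p1 : ℝ → ℝ := gaussPdf (-(a * rf * (x - ρt * w)) / (a ^ 2 + σ ^ 2))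
      (lam / (2 * (a ^ 2 + σ ^ 2) * A ^ (T - t - 1)))
    -- p1 minimizes G among admissible densities
    (∀ p : ℝ → ℝ, IsAdmissibleDensity p → G p1 ≤ G p) ∧
    -- the improved value
    G p1 = A ^ (T - t - 1) * (σ ^ 2 * rf ^ 2 / (a ^ 2 + σ ^ 2)) * (x - ρt * w) ^ 2 +
      lam / 2 * Real.log ((a ^ 2 + σ ^ 2) / (Real.pi * lam)) +
      lam * Real.log A / 2 * ((T : ℝ) - t - 1) + fPaper lam B C A a σ w b T (t + 1) ∧
    -- and it improves upon the value of the initial policy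
    G p1 ≤ A ^ (T - t) * (x - ρt * w) ^ 2 + fPaper lam B C A a σ w b T t := by
  
  intro ρt ρt1 G p1
  have hσ2 : (0:ℝ) < a ^ 2 + σ ^ 2 := by positivity
  have hπ := Real.pi_pos
  have hAn : (0:ℝ) < A ^ (T - t - 1) := pow_pos hApos _
  have hρ : ρt1 = rf * ρt := by
    show (rf⁻¹ : ℝ) ^ (T - (t + 1)) = rf * (rf⁻¹) ^ (T - t)
    rw [show T - t = (T - (t + 1)) + 1 by omega, pow_succ]
    field_simp
  set y : ℝ := x - ρt * w with hy
  set μ : ℝ := -(a * rf * y) / (a ^ 2 + σ ^ 2) with hμ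
  set s2 : ℝ := lam / (2 * (a ^ 2 + σ ^ 2) * A ^ (T - t - 1)) with hs2def
  have hs2 : 0 < s2 := by rw [hs2def]; positivity
  have hp1 : p1 = gaussPdf μ s2 := rfl
  have hm0 : rf * x - ρt1 * w = rf * y := by rw [hy, hρ]; ring
  clear_value y μ s2
  set Cst : ℝ := -((a ^ 2 + σ ^ 2) * A ^ (T - t - 1) * μ ^ 2) -
    lam / 2 * Real.log (2 * Real.pi * s2) with hCst
  clear_value Cst
  -- key pointwise identity
  have hkey : ∀ u : ℝ, A ^ (T - t - 1) * ((a ^ 2 + σ ^ 2) * u ^ 2 +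
      2 * a * (rf * x - ρt1 * w) * u) = Cst - lam * Real.log (gaussPdf μ s2 u) := by
    intro u
    rw [log_gaussPdf μ hs2 u, hm0, hCst, hμ, hs2def]
    field_simp
    ring
  -- value of G at p1
  have hGp1int : (fun u => (A ^ (T - t - 1) * ((a ^ 2 + σ ^ 2) * u ^ 2 +
      2 * a * (rf * x - ρt1 * w) * u) + lam * Real.log (p1 u)) * p1 u)
      = fun u => Cst * gaussPdf μ s2 u := by
    funext u
    rw [hp1]
    linear_combination (gaussPdf μ s2 u) * hkey u
  have hval : G p1 = Cst + A ^ (T - t - 1) * (rf * y) ^ 2 +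
      fPaper lam B C A a σ w b T (t + 1) := by
    show (∫ u, (A ^ (T - t - 1) * ((a ^ 2 + σ ^ 2) * u ^ 2 +
        2 * a * (rf * x - ρt1 * w) * u) + lam * Real.log (p1 u)) * p1 u) +
        A ^ (T - t - 1) * (rf * x - ρt1 * w) ^ 2 + fPaper lam B C A a σ w b T (t + 1) = _
    rw [hGp1int, integral_const_mul, integral_gaussPdf μ hs2, mul_one, hm0]
  -- cast fact
  have hcast : ((T - t - 1 : ℕ) : ℝ) = (T : ℝ) - t - 1 := by
    have h1 : (T - t - 1 : ℕ) = T - (t + 1) := by omega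
    rw [h1, Nat.cast_sub (by omega)]
    push_cast
    ring
  -- log expansions
  have hlog1 : Real.log (2 * Real.pi * s2) = Real.log Real.pi + Real.log lam -
      Real.log (a ^ 2 + σ ^ 2) - ((T - t - 1 : ℕ) : ℝ) * Real.log A := by
    rw [hs2def, show 2 * Real.pi * (lam / (2 * (a ^ 2 + σ ^ 2) * A ^ (T - t - 1)))
        = (Real.pi * lam) / ((a ^ 2 + σ ^ 2) * A ^ (T - t - 1)) by field_simp,
      Real.log_div (by positivity) (by positivity),
      Real.log_mul Real.pi_ne_zero hlam.ne',
      Real.log_mul hσ2.ne' hAn.ne', Real.log_pow]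
    ring
  have hlog2 : Real.log ((a ^ 2 + σ ^ 2) / (Real.pi * lam)) =
      Real.log (a ^ 2 + σ ^ 2) - (Real.log Real.pi + Real.log lam) := by
    rw [Real.log_div hσ2.ne' (by positivity), Real.log_mul Real.pi_ne_zero hlam.ne']
  -- explicit value of G p1
  have hval2 : G p1 = A ^ (T - t - 1) * (σ ^ 2 * rf ^ 2 / (a ^ 2 + σ ^ 2)) * y ^ 2 +
      lam / 2 * Real.log ((a ^ 2 + σ ^ 2) / (Real.pi * lam)) +
      lam * Real.log A / 2 * ((T : ℝ) - t - 1) +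
      fPaper lam B C A a σ w b T (t + 1) := by
    rw [hval, hCst, hlog1, hlog2, hμ, hcast]
    field_simp
    ring
  refine ⟨?_, hval2, ?_⟩
  · -- minimality
    intro p hp
    obtain ⟨hp0, hpone, hpu2, hplogp⟩ := hp
    have hpint : Integrable p := by
      by_contra h
      rw [MeasureTheory.integral_undef h] at hpone
      exact one_ne_zero hpone.symm
    have hpu : Integrable (fun u => u * p u) := by
      refine (hpu2.add hpint).mono' (aestronglyMeasurable_id.mul hpint.1)
        (ae_of_all _ fun u => ?_)
      simp only [id, Real.norm_eq_abs, abs_mul, Pi.add_apply]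
      have h1 : |p u| = p u := abs_of_nonneg (hp0 u)
      rw [h1]
      have h2 : |u| ≤ u ^ 2 + 1 := by nlinarith [sq_nonneg (|u| - 1), sq_abs u, abs_nonneg u]
      nlinarith [mul_le_mul_of_nonneg_right h2 (hp0 u), hp0 u]
    have hq : Integrable (fun u => (A ^ (T - t - 1) * ((a ^ 2 + σ ^ 2) * u ^ 2 +
        2 * a * (rf * x - ρt1 * w) * u)) * p u) := by
      have h1 := hpu2.const_mul (A ^ (T - t - 1) * (a ^ 2 + σ ^ 2))
      have h2 := hpu.const_mul (A ^ (T - t - 1) * (2 * a * (rf * x - ρt1 * w)))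
      refine (h1.add h2).congr (ae_of_all _ fun u => ?_)
      simp only [Pi.add_apply]
      ring
    have hplog1 : Integrable (fun u => p u * Real.log (gaussPdf μ s2 u)) := by
      have h1 := ((hpint.const_mul Cst).sub hq).const_mul lam⁻¹
      refine h1.congr (ae_of_all _ fun u => ?_)
      simp only [Pi.sub_apply]
      rw [hkey u]
      field_simp
      ring
    have hsplit : (fun u => (A ^ (T - t - 1) * ((a ^ 2 + σ ^ 2) * u ^ 2 +
        2 * a * (rf * x - ρt1 * w) * u) + lam * Real.log (p u)) * p u)
        = fun u => Cst * p u +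
          lam * (p u * Real.log (p u) - p u * Real.log (gaussPdf μ s2 u)) := by
      funext u
      linear_combination (p u) * hkey u
    have hint2 : Integrable
        (fun u => p u * Real.log (p u) - p u * Real.log (gaussPdf μ s2 u)) :=
      hplogp.sub hplog1
    have hIeq : (∫ u, (A ^ (T - t - 1) * ((a ^ 2 + σ ^ 2) * u ^ 2 +
        2 * a * (rf * x - ρt1 * w) * u) + lam * Real.log (p u)) * p u)
        = Cst + lam * ∫ u, (p u * Real.log (p u) - p u * Real.log (gaussPdf μ s2 u)) := by
      rw [hsplit, integral_add (hpint.const_mul Cst) (hint2.const_mul lam),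
        integral_const_mul, integral_const_mul, hpone, mul_one]
    have hIpos : 0 ≤ ∫ u, (p u * Real.log (p u) - p u * Real.log (gaussPdf μ s2 u)) := by
      have hmono : (∫ u, (p u - gaussPdf μ s2 u)) ≤
          ∫ u, (p u * Real.log (p u) - p u * Real.log (gaussPdf μ s2 u)) := by
        refine integral_mono (hpint.sub (integrable_gaussPdf μ hs2)) hint2 fun u => ?_
        have hg := gaussPdf_pos μ hs2 u
        rcases eq_or_lt_of_le (hp0 u) with h | h
        · simp only [← h]
          simpa using hg.le
        · have hlog := Real.log_le_sub_one_of_pos (div_pos hg h)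
          rw [Real.log_div hg.ne' h.ne'] at hlog
          have h2 := mul_le_mul_of_nonneg_left hlog h.le
          have h3 : p u * (gaussPdf μ s2 u / p u) = gaussPdf μ s2 u :=
            mul_div_cancel₀ _ h.ne'
          nlinarith [h2, h3]
      rw [integral_sub hpint (integrable_gaussPdf μ hs2), hpone,
        integral_gaussPdf μ hs2, sub_self] at hmono
      exact hmono
    have hGp : G p = Cst +
        lam * (∫ u, (p u * Real.log (p u) - p u * Real.log (gaussPdf μ s2 u))) +
        A ^ (T - t - 1) * (rf * y) ^ 2 + fPaper lam B C A a σ w b T (t + 1) := by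
      show (∫ u, (A ^ (T - t - 1) * ((a ^ 2 + σ ^ 2) * u ^ 2 +
          2 * a * (rf * x - ρt1 * w) * u) + lam * Real.log (p u)) * p u) +
          A ^ (T - t - 1) * (rf * x - ρt1 * w) ^ 2 + fPaper lam B C A a σ w b T (t + 1) = _
      rw [hIeq, hm0]
    rw [hval, hGp]
    have := mul_nonneg hlam.le hIpos
    linarith
  · -- improvement over the initial policy
    have hAc : σ ^ 2 * rf ^ 2 / (a ^ 2 + σ ^ 2) ≤ A := by
      rw [hA, div_le_iff₀ hσ2]
      nlinarith [sq_nonneg ((a ^ 2 + σ ^ 2) * K + rf * a)]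
    have h1 : A ^ (T - t - 1) * (σ ^ 2 * rf ^ 2 / (a ^ 2 + σ ^ 2)) * y ^ 2 ≤
        A ^ (T - t) * y ^ 2 := by
      rw [show T - t = (T - t - 1) + 1 by omega, pow_succ]
      exact mul_le_mul_of_nonneg_right (mul_le_mul_of_nonneg_left hAc hAn.le) (sq_nonneg y)
    have hz : (0:ℝ) < 2 * B * (a ^ 2 + σ ^ 2) * (C * A) ^ (T - t - 1) := by positivity
    have hzl := Real.log_le_sub_one_of_pos hz
    have hlogz : Real.log (2 * B * (a ^ 2 + σ ^ 2) * (C * A) ^ (T - t - 1)) =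
        Real.log 2 + Real.log B + Real.log (a ^ 2 + σ ^ 2) +
          ((T - t - 1 : ℕ) : ℝ) * (Real.log C + Real.log A) := by
      rw [Real.log_mul (by positivity) (pow_pos (by positivity) _).ne',
        Real.log_mul (by positivity) hσ2.ne',
        Real.log_mul two_ne_zero hB.ne', Real.log_pow,
        Real.log_mul hC.ne' hApos.ne']
    have hlog2b : Real.log (2 * Real.pi * lam * B) =
        Real.log 2 + Real.log Real.pi + Real.log lam + Real.log B := by
      rw [Real.log_mul (by positivity) hB.ne', Real.log_mul (by positivity) hlam.ne',
        Real.log_mul two_ne_zero Real.pi_ne_zero]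
    have hcore : Real.log ((a ^ 2 + σ ^ 2) / (Real.pi * lam)) +
        Real.log (2 * Real.pi * lam * B) + 1 +
        ((T - t - 1 : ℕ) : ℝ) * (Real.log C + Real.log A) ≤
        2 * B * (a ^ 2 + σ ^ 2) * (C * A) ^ (T - t - 1) := by
      rw [hlog2, hlog2b]
      rw [hlogz] at hzl
      linarith
    have hD : 1 - C * A ≠ 0 := fun h => hCA (by linarith)
    have hfd := fPaper_step a σ lam w b B C A T t ht hD
    rw [hval2, hfd, ← hcast]
    have hmul := mul_le_mul_of_nonneg_left hcore (by linarith : (0:ℝ) ≤ lam / 2)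
    linarith [hmul, h1]
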